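/- arXiv:1907.00768 — 3 statements merged into one kernel-verified Lean document; each statement's English description precedes it below -/
import Mathlib

section
/- The explicit cylindrical fields satisfy the angular momentum equation of the axisymmetric MHD system: for every ν ≥ 0 and all t ∈ [0,T*), r > 0, z ∈ ℝ, ∂_t v^θ + v^r ∂_r v^θ + v^z ∂_z v^θ + (1/r) v^r v^θ = ν(Δ − 1/r²)v^θ + H^r ∂_r H^θ + H^z ∂_z H^θ + (1/r) H^θ H^r. -/
/-- Partial derivative in the radial variable. -/
noncomputable def dr (f : ℝ → ℝ → ℝ) (r z : ℝ) : ℝ := deriv (fun s => f s z) r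

/-- Partial derivative in the vertical variable. -/
noncomputable def dz (f : ℝ → ℝ → ℝ) (r z : ℝ) : ℝ := deriv (fun s => f r s) z

/-- The axisymmetric Laplacian `Δ = ∂_r² + (1/r)∂_r + ∂_z²`. -/
noncomputable def cylLap (f : ℝ → ℝ → ℝ) (r z : ℝ) : ℝ :=
  deriv (fun s => dr f s z) r + (1 / r) * dr f r z + deriv (fun s => dz f r s) z

/-- Radial velocity `v^r = a r / (T − t)`. -/
noncomputable def vr (T a : ℝ) (t r z : ℝ) : ℝ := a * r / (T - t)

/-- Angular velocity `v^θ = k r (T − t)^{2a}`. -/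
noncomputable def vtheta (T a k : ℝ) (t r z : ℝ) : ℝ := k * r * (T - t) ^ (2 * a)

/-- Vertical velocity `v^z = −2 a z / (T − t)`. -/
noncomputable def vz (T a : ℝ) (t r z : ℝ) : ℝ := -2 * a * z / (T - t)

/-- Radial magnetic field `H^r = ā r`. -/
noncomputable def Hr (ab : ℝ) (t r z : ℝ) : ℝ := ab * r

/-- Angular magnetic field `H^θ = (2āk/(4a+1)) r z (T − t)^{2a+1}`. -/
noncomputable def Htheta (T a ab k : ℝ) (t r z : ℝ) : ℝ :=
  2 * ab * k * r * z * (T - t) ^ (2 * a + 1) / (4 * a + 1)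

/-- Vertical magnetic field `H^z = −2 ā z`. -/
noncomputable def Hz (ab : ℝ) (t r z : ℝ) : ℝ := -2 * ab * z

private lemma deriv_lin (c r : ℝ) : deriv (fun s : ℝ => c * s) r = c := by
  simpa using ((hasDerivAt_id r).const_mul c).deriv

/-- the angular momentum equation of the axisymmetric MHD system
holds for the explicit fields. -/
theorem angular_momentum_equation (T a ab k : ℝ) (hT : 0 < T)
    (hk : k ≠ 0) (hab : ab ≠ 0) (ha : a ≠ 0) (ha' : a ≠ -(1 / 4)) :
    ∀ ν : ℝ, 0 ≤ ν →
    ∀ t ∈ Set.Ico (0 : ℝ) T, ∀ r ∈ Set.Ioi (0 : ℝ), ∀ z : ℝ,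
      deriv (fun s => vtheta T a k s r z) t
          + vr T a t r z * dr (vtheta T a k t) r z
          + vz T a t r z * dz (vtheta T a k t) r z
          + (1 / r) * vr T a t r z * vtheta T a k t r z
        = ν * (cylLap (vtheta T a k t) r z - vtheta T a k t r z / r ^ 2)
          + Hr ab t r z * dr (Htheta T a ab k t) r z
          + Hz ab t r z * dz (Htheta T a ab k t) r z
          + (1 / r) * Htheta T a ab k t r z * Hr ab t r z := by
  intro ν hν t ht r hr z
  have hp : (0:ℝ) < T - t := by
    have := ht.2; linarith
  have hr0 : r ≠ 0 := ne_of_gt hr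
  have ha4 : 4 * a + 1 ≠ 0 := by
    intro h; apply ha'; linarith
  -- time derivative of vtheta
  have hdt : deriv (fun s => vtheta T a k s r z) t
      = k * r * ((2*a) * (T - t) ^ (2*a - 1) * (-1)) := by
    have h1 : HasDerivAt (fun s : ℝ => T - s) (-1) t := by
      simpa using (hasDerivAt_id t).const_sub T
    have h2 : HasDerivAt (fun x : ℝ => x ^ (2*a)) ((2*a) * (T-t) ^ (2*a-1)) (T-t) :=
      Real.hasDerivAt_rpow_const (Or.inl hp.ne')
    exact ((h2.comp t h1).const_mul (k*r)).deriv
  -- radial derivative of vtheta (at any radial point s)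
  have hdrv : ∀ s : ℝ, dr (vtheta T a k t) s z = k * (T - t) ^ (2*a) := by
    intro s
    have : (fun x : ℝ => vtheta T a k t x z)
        = fun x : ℝ => (k * (T - t) ^ (2*a)) * x := by
      funext x; simp [vtheta]; ring
    simp only [dr, this, deriv_lin]
  -- vertical derivative of vtheta (at any vertical point s)
  have hdzv : ∀ s : ℝ, dz (vtheta T a k t) r s = 0 := by
    intro s; simp [dz, vtheta]
  -- second derivatives
  have hdrr : deriv (fun s => dr (vtheta T a k t) s z) r = 0 := by
    have : (fun s => dr (vtheta T a k t) s z) = fun _ => k * (T - t) ^ (2*a) := by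
      funext s; exact hdrv s
    simp [this]
  have hdzz : deriv (fun s => dz (vtheta T a k t) r s) z = 0 := by
    have : (fun s => dz (vtheta T a k t) r s) = fun _ => (0:ℝ) := by
      funext s; exact hdzv s
    simp [this]
  -- radial derivative of Htheta
  have hdrH : dr (Htheta T a ab k t) r z
      = 2 * ab * k * z * (T - t) ^ (2*a + 1) / (4 * a + 1) := by
    have : (fun x : ℝ => Htheta T a ab k t x z)
        = fun x : ℝ => (2 * ab * k * z * (T - t) ^ (2*a + 1) / (4 * a + 1)) * x := by
      funext x; simp [Htheta]; ring
    simp only [dr, this, deriv_lin]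
  -- vertical derivative of Htheta
  have hdzH : dz (Htheta T a ab k t) r z
      = 2 * ab * k * r * (T - t) ^ (2*a + 1) / (4 * a + 1) := by
    have : (fun x : ℝ => Htheta T a ab k t r x)
        = fun x : ℝ => (2 * ab * k * r * (T - t) ^ (2*a + 1) / (4 * a + 1)) * x := by
      funext x; simp [Htheta]; ring
    simp only [dz, this, deriv_lin]
  have hps : (T - t) ^ (2*a) = (T - t) ^ (2*a - 1) * (T - t) := by
    rw [← Real.rpow_add_one hp.ne' (2*a - 1)]; norm_num
  rw [cylLap, hdt, hdrv r, hdzv z, hdrr, hdzz, hdrH, hdzH]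
  simp only [vr, vz, vtheta, Hr, Hz, Htheta]
  rw [hps]
  field_simp
  ring
end

section
/- The explicit cylindrical fields satisfy the radial component of the induction equation: for every μ ≥ 0 and all t ∈ [0,T*), r > 0, z ∈ ℝ, ∂_t H^r + v^r ∂_r H^r + v^z ∂_z H^r = μ(Δ − 1/r²)H^r + H^r ∂_r v^r + H^z ∂_z v^r. -/
/-- the radial component of the induction equation holds for the
explicit fields. -/
theorem radial_induction_equation (T a ab k : ℝ) (hT : 0 < T)
    (hk : k ≠ 0) (hab : ab ≠ 0) (ha : a ≠ 0) (ha' : a ≠ -(1 / 4)) :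
    ∀ μ : ℝ, 0 ≤ μ →
    ∀ t ∈ Set.Ico (0 : ℝ) T, ∀ r ∈ Set.Ioi (0 : ℝ), ∀ z : ℝ,
      deriv (fun s => Hr ab s r z) t
          + vr T a t r z * dr (Hr ab t) r z
          + vz T a t r z * dz (Hr ab t) r z
        = μ * (cylLap (Hr ab t) r z - Hr ab t r z / r ^ 2)
          + Hr ab t r z * dr (vr T a t) r z
          + Hz ab t r z * dz (vr T a t) r z := by
  intro μ hμ t ht r hr z
  have htT : T - t ≠ 0 := sub_ne_zero.mpr (ne_of_gt ht.2)
  have hr0 : r ≠ 0 := ne_of_gt hr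
  simp only [Hr, vr, vz, Hz, dr, dz, cylLap, deriv_const]
  have h1 : ∀ x : ℝ, (deriv (fun s : ℝ => ab * s) x) = ab := by
    intro x; rw [deriv_const_mul _ differentiableAt_fun_id]; simp
  have h2 : deriv (fun s : ℝ => a * s / (T - t)) r = a / (T - t) := by
    simp [div_eq_mul_inv, mul_comm, mul_assoc]
  have h3 : (fun s : ℝ => deriv (fun s : ℝ => ab * s) s) = fun _ => ab := by
    funext s; exact h1 s
  rw [h1, h2, h3]
  simp
  field_simp
  ring
end

section
/- The explicit cylindrical fields satisfy the vertical component of the induction equation: for every μ ≥ 0 and all t ∈ [0,T*), r > 0, z ∈ ℝ, ∂_t H^z + v^r ∂_r H^z + v^z ∂_z H^z = μ Δ H^z + H^r ∂_r v^z + H^z ∂_z v^z. -/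
/-- the vertical component of the induction equation holds for the
explicit fields. -/
theorem vertical_induction_equation (T a ab k : ℝ) (hT : 0 < T)
    (hk : k ≠ 0) (hab : ab ≠ 0) (ha : a ≠ 0) (ha' : a ≠ -(1 / 4)) :
    ∀ μ : ℝ, 0 ≤ μ →
    ∀ t ∈ Set.Ico (0 : ℝ) T, ∀ r ∈ Set.Ioi (0 : ℝ), ∀ z : ℝ,
      deriv (fun s => Hz ab s r z) t
          + vr T a t r z * dr (Hz ab t) r z
          + vz T a t r z * dz (Hz ab t) r z
        = μ * cylLap (Hz ab t) r z
          + Hr ab t r z * dr (vz T a t) r z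
          + Hz ab t r z * dz (vz T a t) r z := by
  intro μ hμ t ht r hr z
  have key : ∀ c x : ℝ, deriv (fun s : ℝ => c * s) x = c := by
    intro c x; rw [deriv_const_mul_field']; simp
  have h1 : deriv (fun s => Hz ab s r z) t = 0 := by simp [Hz]
  have h2 : ∀ t' z', dr (Hz ab t') r z' = 0 := by intro t' z'; simp [dr, Hz]
  have h3 : dz (Hz ab t) r z = -2 * ab := by
    simp only [dz, Hz]; exact key _ _
  have h4 : cylLap (Hz ab t) r z = 0 := by
    unfold cylLap
    have e1 : (fun s => dr (Hz ab t) s z) = fun _ => (0:ℝ) := by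
      funext s; simp [dr, Hz]
    have e2 : (fun s => dz (Hz ab t) r s) = fun _ => (-2 * ab : ℝ) := by
      funext s; simp only [dz, Hz]; exact key _ _
    rw [e1, e2]
    simp [h2]
  have h5 : dr (vz T a t) r z = 0 := by simp [dr, vz]
  have h6 : dz (vz T a t) r z = -2 * a / (T - t) := by
    simp only [dz, vz]
    rw [show (fun s : ℝ => -2 * a * s / (T - t)) = fun s => (-2 * a / (T - t)) * s by
      funext s; ring]
    exact key _ _
  rw [h1, h2, h3, h4, h5, h6]
  simp [vz, Hz]
  ring
end
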